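/- The Jordanian R-matrix is obtained from the standard q-deformed R-matrix by a singular contraction limit: with g(η) = [[1,η],[0,1]] and η = h/(1-q), the transformed matrix (g(η)⊗g(η))⁻¹ · R_q · (g(η)⊗g(η)) converges, as q → 1 (q ≠ 1, over ℝ), to a 4×4 matrix R which satisfies the quantum Yang–Baxter equation and the triangularity condition R·(PRP) = I₄. -/

import Mathlib

open Matrix Filter

/-- The 4×4 flip (permutation) matrix `P`, with `P(eᵢ⊗eⱼ) = eⱼ⊗eᵢ`. -/
def P4 (K : Type*) [CommRing K] : Matrix (Fin 4) (Fin 4) K :=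
  !![1,0,0,0; 0,0,1,0; 0,1,0,0; 0,0,0,1]

/-- `R₁₂ = R ⊗ I₂` as an 8×8 matrix (Kronecker product, row-major encoding). -/
def M12 {K : Type*} [CommRing K] (R : Matrix (Fin 4) (Fin 4) K) :
    Matrix (Fin 8) (Fin 8) K :=
  Matrix.of fun i j =>
    R ⟨(i : ℕ) / 2, by omega⟩ ⟨(j : ℕ) / 2, by omega⟩ *
      (if (i : ℕ) % 2 = (j : ℕ) % 2 then 1 else 0)

/-- `R₂₃ = I₂ ⊗ R` as an 8×8 matrix. -/
def M23 {K : Type*} [CommRing K] (R : Matrix (Fin 4) (Fin 4) K) :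
    Matrix (Fin 8) (Fin 8) K :=
  Matrix.of fun i j =>
    (if (i : ℕ) / 4 = (j : ℕ) / 4 then 1 else 0) *
      R ⟨(i : ℕ) % 4, by omega⟩ ⟨(j : ℕ) % 4, by omega⟩

/-- `R₁₃ = (I₂⊗P)(R⊗I₂)(I₂⊗P)`. -/
def M13 {K : Type*} [CommRing K] (R : Matrix (Fin 4) (Fin 4) K) :
    Matrix (Fin 8) (Fin 8) K :=
  M23 (P4 K) * M12 R * M23 (P4 K)

/-- The quantum Yang–Baxter equation `R₁₂R₁₃R₂₃ = R₂₃R₁₃R₁₂`. -/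
def QYBE {K : Type*} [CommRing K] (R : Matrix (Fin 4) (Fin 4) K) : Prop :=
  M12 R * M13 R * M23 R = M23 R * M13 R * M12 R

/-- The Kronecker product `g ⊗ g` of a 2×2 matrix with itself. -/
def GG {K : Type*} [CommRing K] (g : Matrix (Fin 2) (Fin 2) K) :
    Matrix (Fin 4) (Fin 4) K :=
  Matrix.of fun i j =>
    g ⟨(i : ℕ) / 2, by omega⟩ ⟨(j : ℕ) / 2, by omega⟩ *
      g ⟨(i : ℕ) % 2, by omega⟩ ⟨(j : ℕ) % 2, by omega⟩

/-- The standard one-parameter quantum R-matrix. -/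
def Rq {K : Type*} [Field K] (q : K) : Matrix (Fin 4) (Fin 4) K :=
  !![q,0,0,0; 0,1,q - q⁻¹,0; 0,0,1,0; 0,0,0,q]

/-- The Jordanian (h-deformed) R-matrix. -/
def Rh {K : Type*} [CommRing K] (h : K) : Matrix (Fin 4) (Fin 4) K :=
  !![1,-h,h,h^2; 0,1,0,h; 0,0,1,-h; 0,0,0,1]

/-- The contraction matrix `g(η) = [[1,η],[0,1]]`. -/
def gmat {K : Type*} [CommRing K] (η : K) : Matrix (Fin 2) (Fin 2) K :=
  !![1,η; 0,1]


noncomputable def Fm (h q : ℝ) : Matrix (Fin 4) (Fin 4) ℝ :=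
  !![q,-h,h/q,h^2/q; 0,1,q - q⁻¹,-h/q; 0,0,1,h; 0,0,0,q]

lemma GG_inv (η : ℝ) : (GG (gmat η))⁻¹ = GG (gmat (-η)) := by
  apply Matrix.inv_eq_right_inv
  ext i j
  fin_cases i <;> fin_cases j <;>
    simp [GG, gmat, Matrix.mul_apply, Fin.sum_univ_four, Matrix.one_apply,
      show ((3:Fin 4):ℕ) = 3 from rfl, show ((2:Fin 4):ℕ) = 2 from rfl] <;> ring

lemma key (h q : ℝ) (hq1 : q ≠ 1) (hq0 : q ≠ 0) :
    (GG (gmat (h / (1 - q))))⁻¹ * Rq q * GG (gmat (h / (1 - q))) = Fm h q := by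
  rw [GG_inv]
  have h1q : 1 - q ≠ 0 := sub_ne_zero.2 (Ne.symm hq1)
  ext i j
  fin_cases i <;> fin_cases j <;>
    simp [GG, gmat, Rq, Fm, Matrix.mul_apply, Fin.sum_univ_four,
      show ((3:Fin 4):ℕ) = 3 from rfl, show ((2:Fin 4):ℕ) = 2 from rfl,
      Matrix.vecHead, Matrix.vecTail] <;>
    (try field_simp) <;> (try ring)

lemma R0_lim (h : ℝ) :
    Filter.Tendsto (fun q : ℝ => Fm h q) (nhds 1) (nhds (Fm h 1)) := by
  refine tendsto_pi_nhds.2 fun i => tendsto_pi_nhds.2 fun j => ?_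
  fin_cases i <;> fin_cases j <;> simp [Fm] <;>
    first
      | exact tendsto_const_nhds
      | exact continuousAt_id
      | (have hc : ContinuousAt (fun q : ℝ => h / q) 1 :=
            continuousAt_const.div continuousAt_id one_ne_zero
         simpa using hc.tendsto)
      | (have hc : ContinuousAt (fun q : ℝ => -h / q) 1 :=
            continuousAt_const.div continuousAt_id one_ne_zero
         simpa using hc.tendsto)
      | (have hc : ContinuousAt (fun q : ℝ => h ^ 2 / q) 1 :=
            continuousAt_const.div continuousAt_id one_ne_zero
         simpa using hc.tendsto)
      | (have hc : ContinuousAt (fun q : ℝ => q - q⁻¹) 1 :=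
            continuousAt_id.sub (continuousAt_inv₀ one_ne_zero)
         simpa using hc.tendsto)

noncomputable def A12 (h : ℝ) : Matrix (Fin 8) (Fin 8) ℝ :=
  !![1, 0, -h, 0, h, 0, h^2, 0;
     0, 1, 0, -h, 0, h, 0, h^2;
     0, 0, 1, 0, 0, 0, -h, 0;
     0, 0, 0, 1, 0, 0, 0, -h;
     0, 0, 0, 0, 1, 0, h, 0;
     0, 0, 0, 0, 0, 1, 0, h;
     0, 0, 0, 0, 0, 0, 1, 0;
     0, 0, 0, 0, 0, 0, 0, 1]

noncomputable def A23 (h : ℝ) : Matrix (Fin 8) (Fin 8) ℝ :=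
  !![1, -h, h, h^2, 0, 0, 0, 0;
     0, 1, 0, -h, 0, 0, 0, 0;
     0, 0, 1, h, 0, 0, 0, 0;
     0, 0, 0, 1, 0, 0, 0, 0;
     0, 0, 0, 0, 1, -h, h, h^2;
     0, 0, 0, 0, 0, 1, 0, -h;
     0, 0, 0, 0, 0, 0, 1, h;
     0, 0, 0, 0, 0, 0, 0, 1]

noncomputable def A13 (h : ℝ) : Matrix (Fin 8) (Fin 8) ℝ :=
  !![1, -h, 0, 0, h, h^2, 0, 0;
     0, 1, 0, 0, 0, -h, 0, 0;
     0, 0, 1, -h, 0, 0, h, h^2;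
     0, 0, 0, 1, 0, 0, 0, -h;
     0, 0, 0, 0, 1, h, 0, 0;
     0, 0, 0, 0, 0, 1, 0, 0;
     0, 0, 0, 0, 0, 0, 1, h;
     0, 0, 0, 0, 0, 0, 0, 1]

noncomputable def B23 : Matrix (Fin 8) (Fin 8) ℝ :=
  !![1,0,0,0,0,0,0,0; 0,0,1,0,0,0,0,0; 0,1,0,0,0,0,0,0; 0,0,0,1,0,0,0,0;
     0,0,0,0,1,0,0,0; 0,0,0,0,0,0,1,0; 0,0,0,0,0,1,0,0; 0,0,0,0,0,0,0,1]

@[simp] lemma consv_2_1 {α : Type*} (x : α) (u : Fin 1 → α) : Matrix.vecCons x u (1 : Fin 2) = u (0 : Fin 1) := rfl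
@[simp] lemma consv_3_1 {α : Type*} (x : α) (u : Fin 2 → α) : Matrix.vecCons x u (1 : Fin 3) = u (0 : Fin 2) := rfl
@[simp] lemma consv_3_2 {α : Type*} (x : α) (u : Fin 2 → α) : Matrix.vecCons x u (2 : Fin 3) = u (1 : Fin 2) := rfl
@[simp] lemma consv_4_1 {α : Type*} (x : α) (u : Fin 3 → α) : Matrix.vecCons x u (1 : Fin 4) = u (0 : Fin 3) := rfl
@[simp] lemma consv_4_2 {α : Type*} (x : α) (u : Fin 3 → α) : Matrix.vecCons x u (2 : Fin 4) = u (1 : Fin 3) := rfl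
@[simp] lemma consv_4_3 {α : Type*} (x : α) (u : Fin 3 → α) : Matrix.vecCons x u (3 : Fin 4) = u (2 : Fin 3) := rfl
@[simp] lemma consv_5_1 {α : Type*} (x : α) (u : Fin 4 → α) : Matrix.vecCons x u (1 : Fin 5) = u (0 : Fin 4) := rfl
@[simp] lemma consv_5_2 {α : Type*} (x : α) (u : Fin 4 → α) : Matrix.vecCons x u (2 : Fin 5) = u (1 : Fin 4) := rfl
@[simp] lemma consv_5_3 {α : Type*} (x : α) (u : Fin 4 → α) : Matrix.vecCons x u (3 : Fin 5) = u (2 : Fin 4) := rfl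
@[simp] lemma consv_5_4 {α : Type*} (x : α) (u : Fin 4 → α) : Matrix.vecCons x u (4 : Fin 5) = u (3 : Fin 4) := rfl
@[simp] lemma consv_6_1 {α : Type*} (x : α) (u : Fin 5 → α) : Matrix.vecCons x u (1 : Fin 6) = u (0 : Fin 5) := rfl
@[simp] lemma consv_6_2 {α : Type*} (x : α) (u : Fin 5 → α) : Matrix.vecCons x u (2 : Fin 6) = u (1 : Fin 5) := rfl
@[simp] lemma consv_6_3 {α : Type*} (x : α) (u : Fin 5 → α) : Matrix.vecCons x u (3 : Fin 6) = u (2 : Fin 5) := rfl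
@[simp] lemma consv_6_4 {α : Type*} (x : α) (u : Fin 5 → α) : Matrix.vecCons x u (4 : Fin 6) = u (3 : Fin 5) := rfl
@[simp] lemma consv_6_5 {α : Type*} (x : α) (u : Fin 5 → α) : Matrix.vecCons x u (5 : Fin 6) = u (4 : Fin 5) := rfl
@[simp] lemma consv_7_1 {α : Type*} (x : α) (u : Fin 6 → α) : Matrix.vecCons x u (1 : Fin 7) = u (0 : Fin 6) := rfl
@[simp] lemma consv_7_2 {α : Type*} (x : α) (u : Fin 6 → α) : Matrix.vecCons x u (2 : Fin 7) = u (1 : Fin 6) := rfl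
@[simp] lemma consv_7_3 {α : Type*} (x : α) (u : Fin 6 → α) : Matrix.vecCons x u (3 : Fin 7) = u (2 : Fin 6) := rfl
@[simp] lemma consv_7_4 {α : Type*} (x : α) (u : Fin 6 → α) : Matrix.vecCons x u (4 : Fin 7) = u (3 : Fin 6) := rfl
@[simp] lemma consv_7_5 {α : Type*} (x : α) (u : Fin 6 → α) : Matrix.vecCons x u (5 : Fin 7) = u (4 : Fin 6) := rfl
@[simp] lemma consv_7_6 {α : Type*} (x : α) (u : Fin 6 → α) : Matrix.vecCons x u (6 : Fin 7) = u (5 : Fin 6) := rfl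
@[simp] lemma consv_8_1 {α : Type*} (x : α) (u : Fin 7 → α) : Matrix.vecCons x u (1 : Fin 8) = u (0 : Fin 7) := rfl
@[simp] lemma consv_8_2 {α : Type*} (x : α) (u : Fin 7 → α) : Matrix.vecCons x u (2 : Fin 8) = u (1 : Fin 7) := rfl
@[simp] lemma consv_8_3 {α : Type*} (x : α) (u : Fin 7 → α) : Matrix.vecCons x u (3 : Fin 8) = u (2 : Fin 7) := rfl
@[simp] lemma consv_8_4 {α : Type*} (x : α) (u : Fin 7 → α) : Matrix.vecCons x u (4 : Fin 8) = u (3 : Fin 7) := rfl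
@[simp] lemma consv_8_5 {α : Type*} (x : α) (u : Fin 7 → α) : Matrix.vecCons x u (5 : Fin 8) = u (4 : Fin 7) := rfl
@[simp] lemma consv_8_6 {α : Type*} (x : α) (u : Fin 7 → α) : Matrix.vecCons x u (6 : Fin 8) = u (5 : Fin 7) := rfl
@[simp] lemma consv_8_7 {α : Type*} (x : α) (u : Fin 7 → α) : Matrix.vecCons x u (7 : Fin 8) = u (6 : Fin 7) := rfl

@[simp] lemma vec8_at4 {α : Type*} (a₀ a₁ a₂ a₃ a₄ a₅ a₆ a₇ : α) :
    ![a₀,a₁,a₂,a₃,a₄,a₅,a₆,a₇] (4:Fin 8) = a₄ := rfl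
@[simp] lemma vec8_at5 {α : Type*} (a₀ a₁ a₂ a₃ a₄ a₅ a₆ a₇ : α) :
    ![a₀,a₁,a₂,a₃,a₄,a₅,a₆,a₇] (5:Fin 8) = a₅ := rfl
@[simp] lemma vec8_at6 {α : Type*} (a₀ a₁ a₂ a₃ a₄ a₅ a₆ a₇ : α) :
    ![a₀,a₁,a₂,a₃,a₄,a₅,a₆,a₇] (6:Fin 8) = a₆ := rfl
@[simp] lemma vec8_at7 {α : Type*} (a₀ a₁ a₂ a₃ a₄ a₅ a₆ a₇ : α) :
    ![a₀,a₁,a₂,a₃,a₄,a₅,a₆,a₇] (7:Fin 8) = a₇ := rfl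

lemma fin8cast : ∀ k : Fin 8, ((k : Fin 8) : ℕ) = k.val := fun _ => rfl

lemma e12 (h : ℝ) : M12 (Fm h 1) = A12 h := by
  ext i j
  fin_cases i <;> fin_cases j <;>
    norm_num [M12, Fm, A12]

lemma e23 (h : ℝ) : M23 (Fm h 1) = A23 h := by
  ext i j
  fin_cases i <;> fin_cases j <;>
    norm_num [M23, Fm, A23]

lemma eB : M23 (P4 ℝ) = B23 := by
  ext i j
  fin_cases i <;> fin_cases j <;>
    norm_num [M23, P4, B23]

set_option maxHeartbeats 2000000 in
lemma e13 (h : ℝ) : M13 (Fm h 1) = A13 h := by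
  rw [M13, e12, eB]
  ext i j
  fin_cases i <;> fin_cases j <;>
    simp [B23, A12, A13, Matrix.mul_apply, Fin.sum_univ_succ, Matrix.vecHead, Matrix.vecTail] <;> ring

noncomputable def C1 (h : ℝ) : Matrix (Fin 8) (Fin 8) ℝ :=
  !![1, -h, -h, h^2, 2*h, 2*h^2, 0, 0;
     0, 1, 0, -h, 0, 0, 0, 2*h^2;
     0, 0, 1, -h, 0, 0, 0, 0;
     0, 0, 0, 1, 0, 0, 0, -2*h;
     0, 0, 0, 0, 1, h, h, h^2;
     0, 0, 0, 0, 0, 1, 0, h;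
     0, 0, 0, 0, 0, 0, 1, h;
     0, 0, 0, 0, 0, 0, 0, 1]

noncomputable def EE (h : ℝ) : Matrix (Fin 8) (Fin 8) ℝ :=
  !![1, -2*h, 0, 2*h^2, 2*h, 0, 2*h^2, 0;
     0, 1, 0, -2*h, 0, 0, 0, 2*h^2;
     0, 0, 1, 0, 0, 0, 0, 0;
     0, 0, 0, 1, 0, 0, 0, -2*h;
     0, 0, 0, 0, 1, 0, 2*h, 2*h^2;
     0, 0, 0, 0, 0, 1, 0, 0;
     0, 0, 0, 0, 0, 0, 1, 2*h;
     0, 0, 0, 0, 0, 0, 0, 1]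

noncomputable def D1 (h : ℝ) : Matrix (Fin 8) (Fin 8) ℝ :=
  !![1, -2*h, h, 0, h, 2*h^2, h^2, 0;
     0, 1, 0, -h, 0, -h, 0, h^2;
     0, 0, 1, 0, 0, 0, h, 0;
     0, 0, 0, 1, 0, 0, 0, -h;
     0, 0, 0, 0, 1, 0, h, 2*h^2;
     0, 0, 0, 0, 0, 1, 0, -h;
     0, 0, 0, 0, 0, 0, 1, 2*h;
     0, 0, 0, 0, 0, 0, 0, 1]

set_option maxHeartbeats 2000000 in
lemma mulC1 (h : ℝ) : A12 h * A13 h = C1 h := by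
  ext i j
  fin_cases i <;> fin_cases j <;>
    simp [A12, A23, A13, B23, C1, EE, D1, Matrix.mul_apply, Fin.sum_univ_succ, Matrix.vecHead, Matrix.vecTail] <;> ring

set_option maxHeartbeats 2000000 in
lemma mulE (h : ℝ) : C1 h * A23 h = EE h := by
  ext i j
  fin_cases i <;> fin_cases j <;>
    simp [A12, A23, A13, B23, C1, EE, D1, Matrix.mul_apply, Fin.sum_univ_succ, Matrix.vecHead, Matrix.vecTail] <;> ring

set_option maxHeartbeats 2000000 in
lemma mulD1 (h : ℝ) : A23 h * A13 h = D1 h := by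
  ext i j
  fin_cases i <;> fin_cases j <;>
    simp [A12, A23, A13, B23, C1, EE, D1, Matrix.mul_apply, Fin.sum_univ_succ, Matrix.vecHead, Matrix.vecTail] <;> ring

set_option maxHeartbeats 2000000 in
lemma mulE2 (h : ℝ) : D1 h * A12 h = EE h := by
  ext i j
  fin_cases i <;> fin_cases j <;>
    simp [A12, A23, A13, B23, C1, EE, D1, Matrix.mul_apply, Fin.sum_univ_succ, Matrix.vecHead, Matrix.vecTail] <;> ring

lemma qybe_R0 (h : ℝ) : QYBE (Fm h 1) := by
  rw [QYBE, e12, e23, e13]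
  rw [mulC1, mulE, mulD1, mulE2]

set_option maxHeartbeats 2000000 in
lemma tri_R0 (h : ℝ) : Fm h 1 * (P4 ℝ * Fm h 1 * P4 ℝ) = 1 := by
  ext i j
  fin_cases i <;> fin_cases j <;>
    norm_num [Fm, P4, Matrix.mul_apply, Fin.sum_univ_four, Matrix.one_apply,
      Matrix.vecHead, Matrix.vecTail, Fin.ext_iff] <;> ring

theorem stmt7 (h : ℝ) :
    ∃ R₀ : Matrix (Fin 4) (Fin 4) ℝ,
      Filter.Tendsto
        (fun q : ℝ =>
          (GG (gmat (h / (1 - q))))⁻¹ * Rq q * GG (gmat (h / (1 - q))))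
        (nhdsWithin 1 {1}ᶜ) (nhds R₀) ∧
      QYBE R₀ ∧ R₀ * (P4 ℝ * R₀ * P4 ℝ) = 1 := by
  refine ⟨Fm h 1, ?_, ?_, ?_⟩
  · have hev : (fun q : ℝ =>
        (GG (gmat (h / (1 - q))))⁻¹ * Rq q * GG (gmat (h / (1 - q))))
        =ᶠ[nhdsWithin 1 {1}ᶜ] fun q => Fm h q := by
      have h0 : ∀ᶠ q : ℝ in nhdsWithin 1 {1}ᶜ, q ≠ 0 :=
        eventually_nhdsWithin_of_eventually_nhds
          (eventually_ne_nhds one_ne_zero)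
      have h1 : ∀ᶠ q : ℝ in nhdsWithin 1 {1}ᶜ, q ≠ 1 := by
        filter_upwards [self_mem_nhdsWithin] with q hq
        exact hq
      filter_upwards [h0, h1] with q hq0 hq1
      exact key h q hq1 hq0
    exact ((R0_lim h).mono_left nhdsWithin_le_nhds).congr' hev.symm
  · exact qybe_R0 h
  · exact tri_R0 h
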